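/- If A ⊆ L⁰₊ is convex, solid, and closed in probability, and there exist ε > 0 and a sequence (X_n) ⊆ A with P(X_n > 2^n) > ε for all n, then setting E_n = {X_n > 2^n} and E = limsup E_n = ⋂_m ⋃_{n≥m} E_n, one has m·1_E ∈ A for every natural number m, and P(E) ≥ ε. -/

import Mathlib

open MeasureTheory Filter

variable {Ω : Type*} [MeasurableSpace Ω]

/-- `A ⊆ L⁰₊` is solid: `X ∈ A` and `0 ≤ Y ≤ X` (a.e.) imply `Y ∈ A`. -/
def Solid (P : Measure Ω) (A : Set (Ω → ℝ)) : Prop :=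
  ∀ X ∈ A, ∀ Y : Ω → ℝ, (∀ᵐ ω ∂P, 0 ≤ Y ω ∧ Y ω ≤ X ω) → Y ∈ A

/-- Radial boundedness for a set of positive random variables: every ray through a
nonzero element eventually leaves the set. -/
def RadiallyBoundedPos (P : Measure Ω) (A : Set (Ω → ℝ)) : Prop :=
  ∀ X ∈ A, P {ω | 0 < X ω} ≠ 0 →
    ∃ Λ > (0 : ℝ), ∀ l : ℝ, Λ < l → (fun ω => l * X ω) ∉ A

/-- Tightness (boundedness in probability) for a set of positive random variables. -/
def TightPos (P : Measure Ω) (A : Set (Ω → ℝ)) : Prop :=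
  ∀ ε > (0 : ℝ), ∃ M > (0 : ℝ), ∀ X ∈ A, P {ω | M < X ω} < ENNReal.ofReal ε

/-- Radial boundedness for a general set of random variables. -/
def RadiallyBounded (P : Measure Ω) (A : Set (Ω → ℝ)) : Prop :=
  ∀ X ∈ A, P {ω | X ω ≠ 0} ≠ 0 →
    ∃ Λ > (0 : ℝ), ∀ l : ℝ, Λ < l → (fun ω => l * X ω) ∉ A

/-- Tightness (boundedness in probability) for a general set of random variables. -/
def Tight (P : Measure Ω) (A : Set (Ω → ℝ)) : Prop :=
  ∀ ε > (0 : ℝ), ∃ M > (0 : ℝ), ∀ X ∈ A, P {ω | M < |X ω|} < ENNReal.ofReal ε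

/-- Membership in the closure of `A` for the (metrizable) topology of convergence
in probability. -/
def InClosure (P : Measure Ω) (A : Set (Ω → ℝ)) (X : Ω → ℝ) : Prop :=
  ∃ Y : ℕ → Ω → ℝ, (∀ n, Y n ∈ A) ∧ TendstoInMeasure P Y atTop X

/-- If `A ⊆ L⁰₊` is convex, solid and closed in probability, and `P(Xₙ > 2ⁿ) > ε` for a
sequence `(Xₙ) ⊆ A`, then with `E = limsup {Xₙ > 2ⁿ}` one has `m·1_E ∈ A` for every
`m ∈ ℕ`, and `P(E) ≥ ε`. -/
theorem stmt6 (P : Measure Ω) [IsProbabilityMeasure P] (A : Set (Ω → ℝ))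
    (hL0 : ∀ X ∈ A, AEMeasurable X P) (hpos : ∀ X ∈ A, ∀ᵐ ω ∂P, 0 ≤ X ω)
    (hconv : Convex ℝ A) (hsolid : Solid P A)
    (hclosed : ∀ X : Ω → ℝ, InClosure P A X → X ∈ A)
    (ε : ℝ) (hε : 0 < ε) (X : ℕ → Ω → ℝ) (hX : ∀ n, X n ∈ A) (hXm : ∀ n, Measurable (X n))
    (hbig : ∀ n : ℕ, ENNReal.ofReal ε < P {ω | (2 : ℝ) ^ n < X n ω}) :
    (∀ m : ℕ,
        Set.indicator (⋂ m', ⋃ n, ⋃ (_ : m' ≤ n), {ω | (2 : ℝ) ^ n < X n ω})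
          (fun _ => (m : ℝ)) ∈ A) ∧
      ENNReal.ofReal ε ≤ P (⋂ m', ⋃ n, ⋃ (_ : m' ≤ n), {ω | (2 : ℝ) ^ n < X n ω}) := by
  classical
  set S : ℕ → Set Ω := fun n => {ω | (2 : ℝ) ^ n < X n ω} with hS_def
  have hSmeas : ∀ n, MeasurableSet (S n) := fun n =>
    measurableSet_lt measurable_const (hXm n)
  set F : ℕ → Set Ω := fun k => ⋃ n, ⋃ (_ : k ≤ n), S n with hF_def
  have hFmeas : ∀ k, MeasurableSet (F k) := fun k =>
    MeasurableSet.iUnion fun n => MeasurableSet.iUnion fun _ => hSmeas n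
  have hFanti : Antitone F := by
    intro a b hab
    exact Set.iUnion₂_mono' fun n hn => ⟨n, hab.trans hn, subset_rfl⟩
  have hP : ENNReal.ofReal ε ≤ P (⋂ k, F k) := by
    have htend := tendsto_measure_iInter_atTop (μ := P)
      (fun k => (hFmeas k).nullMeasurableSet) hFanti ⟨0, measure_ne_top P _⟩
    refine ge_of_tendsto htend (Eventually.of_forall fun k => ?_)
    refine le_trans (hbig k).le (measure_mono ?_)
    exact Set.subset_iUnion₂ (s := fun n (_ : k ≤ n) => S n) k le_rfl
  have h0A : (0 : Ω → ℝ) ∈ A := by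
    refine hsolid (X 0) (hX 0) 0 ?_
    filter_upwards [hpos (X 0) (hX 0)] with ω hω
    exact ⟨le_rfl, hω⟩
  have hZ : ∀ n, Set.indicator (S n) (fun _ => (2 : ℝ) ^ n) ∈ A := by
    intro n
    refine hsolid (X n) (hX n) _ ?_
    filter_upwards [hpos (X n) (hX n)] with ω hω
    refine ⟨Set.indicator_nonneg (fun _ _ => by positivity) ω, ?_⟩
    by_cases h : ω ∈ S n
    · rw [Set.indicator_of_mem h]
      exact le_of_lt h
    · rw [Set.indicator_of_notMem h]
      exact hω
  refine ⟨fun m => ?_, hP⟩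
  -- weights bound
  have hsum_le : ∀ N : ℕ, ∑ n ∈ Finset.Icc (m + 1) (m + 1 + N), (m : ℝ) / 2 ^ n ≤ 1 := by
    intro N
    have h1 : ∑ n ∈ Finset.Icc (m + 1) (m + 1 + N), (m : ℝ) / 2 ^ n
        = ∑ i ∈ Finset.range (N + 1), (m : ℝ) / 2 ^ (m + 1) * (1 / 2) ^ i := by
      rw [← Finset.Ico_add_one_right_eq_Icc, Finset.sum_Ico_eq_sum_range]
      have : m + 1 + N + 1 - (m + 1) = N + 1 := by omega
      rw [this]
      refine Finset.sum_congr rfl fun i _ => ?_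
      rw [pow_add]
      field_simp
      rw [mul_assoc, ← mul_pow]; norm_num
    rw [h1, ← Finset.mul_sum]
    have h2 : (∑ i ∈ Finset.range (N + 1), (1 / 2 : ℝ) ^ i) ≤ 2 := sum_geometric_two_le _
    have h3 : (0 : ℝ) ≤ (m : ℝ) / 2 ^ (m + 1) := by positivity
    calc (m : ℝ) / 2 ^ (m + 1) * ∑ i ∈ Finset.range (N + 1), (1 / 2 : ℝ) ^ i
        ≤ (m : ℝ) / 2 ^ (m + 1) * 2 := by exact mul_le_mul_of_nonneg_left h2 h3
      _ = (m : ℝ) / 2 ^ m := by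
          rw [pow_succ]; field_simp
      _ ≤ 1 := by
          rw [div_le_one (by positivity)]
          exact_mod_cast (Nat.lt_two_pow_self (n := m)).le
  -- the truncated unions
  have hUA : ∀ N : ℕ, Set.indicator (⋃ n ∈ Finset.Icc (m + 1) (m + 1 + N), S n)
      (fun _ => (m : ℝ)) ∈ A := by
    intro N
    set t := Finset.Icc (m + 1) (m + 1 + N) with ht
    have h0t : (0 : ℕ) ∉ t := by simp [ht, Finset.mem_Icc]
    set w : ℕ → ℝ := fun n => if n = 0 then 1 - ∑ n ∈ t, (m : ℝ) / 2 ^ n else (m : ℝ) / 2 ^ n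
      with hw
    set z : ℕ → Ω → ℝ := fun n => if n = 0 then 0 else Set.indicator (S n) (fun _ => (2 : ℝ) ^ n)
      with hz
    have hWA : (∑ n ∈ insert 0 t, w n • z n) ∈ A := by
      refine hconv.sum_mem ?_ ?_ ?_
      · intro i hi
        rcases Finset.mem_insert.1 hi with hi | hi
        · subst hi; simp only [hw, if_pos rfl, sub_nonneg]; exact hsum_le N
        · have hi0 : i ≠ 0 := fun h => h0t (h ▸ hi)
          simp only [hw, if_neg hi0]
          positivity
      · have hts : ∑ x ∈ t, w x = ∑ x ∈ t, (m : ℝ) / 2 ^ x :=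
          Finset.sum_congr rfl fun i hi => if_neg (show i ≠ 0 from fun h => h0t (h ▸ hi))
        rw [Finset.sum_insert h0t, hts]
        show (if (0:ℕ) = 0 then 1 - ∑ n ∈ t, (m : ℝ) / 2 ^ n else (m : ℝ) / 2 ^ 0)
            + ∑ x ∈ t, (m : ℝ) / 2 ^ x = 1
        rw [if_pos rfl]
        ring
      · intro i hi
        rcases Finset.mem_insert.1 hi with hi | hi
        · subst hi; simpa [hz] using h0A
        · have hi0 : i ≠ 0 := fun h => h0t (h ▸ hi)
          simp only [hz, if_neg hi0]
          exact hZ i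
    refine hsolid _ hWA _ (ae_of_all _ fun ω => ?_)
    constructor
    · exact Set.indicator_nonneg (fun _ _ => Nat.cast_nonneg m) ω
    · by_cases hω : ω ∈ ⋃ n ∈ t, S n
      · rw [Set.indicator_of_mem hω]
        obtain ⟨n0, hn0t, hn0⟩ := Set.mem_iUnion₂.1 hω
        have hterm : (m : ℝ) = w n0 • z n0 ω + ((0:ℝ)) • ((0:Ω → ℝ)) ω := by
          have hn00 : n0 ≠ 0 := fun h => h0t (h ▸ hn0t)
          simp only [hw, hz, if_neg hn00, smul_eq_mul, Pi.zero_apply, mul_zero, add_zero,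
            Set.indicator_of_mem hn0]
          field_simp
        have hle : w n0 • z n0 ω ≤ (∑ n ∈ insert 0 t, w n • z n) ω := by
          rw [Finset.sum_apply]
          refine Finset.single_le_sum (f := fun n => w n • z n ω)
            (fun i hi => ?_) (Finset.mem_insert_of_mem hn0t)
          rcases Finset.mem_insert.1 hi with hi | hi
          · subst hi
            simp only [hz, if_pos rfl, Pi.zero_apply, smul_eq_mul, mul_zero, le_refl]
          · have hi0 : i ≠ 0 := fun h => h0t (h ▸ hi)
            simp only [hw, hz, if_neg hi0, smul_eq_mul]
            exact mul_nonneg (by positivity) (Set.indicator_nonneg (fun _ _ => by positivity) ω)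
        calc (m : ℝ) = w n0 • z n0 ω + ((0:ℝ)) • ((0:Ω → ℝ)) ω := hterm
          _ = w n0 • z n0 ω := by simp
          _ ≤ _ := hle
      · rw [Set.indicator_of_notMem hω, Finset.sum_apply]
        refine Finset.sum_nonneg fun i hi => ?_
        rcases Finset.mem_insert.1 hi with hi | hi
        · subst hi
          simp [hz]
        · have hi0 : i ≠ 0 := fun h => h0t (h ▸ hi)
          simp only [hw, hz, if_neg hi0, smul_eq_mul, Pi.smul_apply]
          exact mul_nonneg (by positivity) (Set.indicator_nonneg (fun _ _ => by positivity) ω)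
  -- closedness step
  have hFA : Set.indicator (F (m + 1)) (fun _ => (m : ℝ)) ∈ A := by
    refine hclosed _ ⟨fun N => Set.indicator (⋃ n ∈ Finset.Icc (m + 1) (m + 1 + N), S n)
      (fun _ => (m : ℝ)), hUA, ?_⟩
    refine tendstoInMeasure_of_tendsto_ae (fun N => Measurable.aestronglyMeasurable ?_)
      (ae_of_all _ fun ω => ?_)
    · exact (measurable_const.indicator
        (Finset.measurableSet_biUnion _ fun n _ => hSmeas n))
    · by_cases hω : ω ∈ F (m + 1)
      · have : ∃ n, (m + 1 ≤ n) ∧ ω ∈ S n := by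
          simpa [hF_def, Set.mem_iUnion] using hω
        obtain ⟨n, hn, hωn⟩ := this
        refine Tendsto.congr' ?_ tendsto_const_nhds
        filter_upwards [eventually_ge_atTop (n - (m + 1))] with N hN
        have hmem' : ω ∈ ⋃ n ∈ Finset.Icc (m + 1) (m + 1 + N), S n :=
          Set.mem_iUnion₂.2 ⟨n, Finset.mem_Icc.2 ⟨hn, by omega⟩, hωn⟩
        rw [Set.indicator_of_mem hω, Set.indicator_of_mem hmem']
      · have hnot : ∀ N : ℕ, ω ∉ ⋃ n ∈ Finset.Icc (m + 1) (m + 1 + N), S n := by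
          intro N hc
          obtain ⟨n0, hn0t, hn0⟩ := Set.mem_iUnion₂.1 hc
          refine hω ?_
          rw [Finset.mem_Icc] at hn0t
          exact Set.mem_biUnion hn0t.1 hn0
        have : (fun N => Set.indicator (⋃ n ∈ Finset.Icc (m + 1) (m + 1 + N), S n)
            (fun _ => (m : ℝ)) ω) = fun _ => (0 : ℝ) := by
          funext N
          exact Set.indicator_of_notMem (hnot N) _
        rw [this, Set.indicator_of_notMem hω]
        exact tendsto_const_nhds
  -- final solid step
  refine hsolid _ hFA _ (ae_of_all _ fun ω => ?_)
  refine ⟨Set.indicator_nonneg (fun _ _ => Nat.cast_nonneg m) ω, ?_⟩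
  exact Set.indicator_le_indicator_of_subset (Set.iInter_subset F (m + 1))
    (fun _ => Nat.cast_nonneg m) ω
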